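/- Let (R,m) be a regular local ring, let p = xR be a principal prime ideal of R, and let q be a prime ideal of R with x ∉ q. Then for all positive integers m and n, p^{(m)} ∩ q^{(n)} = p^m q^{(n)}; in particular p^{(m)} ∩ q^{(n)} ⊆ m^{m+n} whenever q^{(n)} ⊆ m^n. -/

import Mathlib

open IsLocalRing

/-- The length of an `R`-module `M`, defined as the Krull dimension of its lattice of
submodules (i.e. the supremum of lengths of strictly increasing chains of submodules),
truncated to a natural number. -/
noncomputable def moduleLength (R M : Type*) [Ring R] [AddCommGroup M] [Module R M] : ℕ :=
  (WithBot.unbotD 0 (Order.krullDim (Submodule R M))).toNat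

open Classical in
/-- The Hilbert–Samuel multiplicity `e_R(I, M)`: `d!` times the leading coefficient of the
polynomial that agrees with `t ↦ length_R (M / I^(t+1) M)` for all large `t`, where
`d = dim (R / ann M)` is the dimension of `M`. -/
noncomputable def hilbertSamuelMultiplicity (R : Type*) [CommRing R] (I : Ideal R)
    (M : Type*) [AddCommGroup M] [Module R M] : ℚ :=
  if h : ∃ p : Polynomial ℚ, ∀ᶠ t : ℕ in Filter.atTop,
      p.eval (t : ℚ) = moduleLength R (M ⧸ (I ^ (t + 1) • ⊤ : Submodule R M))
  then ((ENat.toNat (WithBot.unbotD 0 (ringKrullDim (R ⧸ Module.annihilator R M)))).factorial : ℚ) *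
      h.choose.leadingCoeff
  else 0

/-- The Hilbert–Samuel multiplicity `e(A)` of a local ring `A` (with maximal ideal
`IsLocalRing.maximalIdeal A`). -/
noncomputable def eMult (A : Type*) [CommRing A] [IsLocalRing A] : ℚ :=
  hilbertSamuelMultiplicity A (maximalIdeal A) A

/-- `e(A_P)`: the Hilbert–Samuel multiplicity of the localization of `A` at a prime `P`. -/
noncomputable def eLocal (A : Type*) [CommRing A] (P : Ideal A) (hP : P.IsPrime) : ℚ :=
  letI := hP
  eMult (Localization.AtPrime P)

/-- The contraction `(I^n A_P) ∩ A` of the `n`-th power of `I` in the localization at the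
prime `P`, i.e. the preimage under `A → A_P`. -/
noncomputable def contractedPow {A : Type*} [CommRing A] (I P : Ideal A) (hP : P.IsPrime)
    (n : ℕ) : Ideal A :=
  letI := hP
  (Ideal.map (algebraMap A (Localization.AtPrime P)) I ^ n).comap
    (algebraMap A (Localization.AtPrime P))

/-- The `m`-th symbolic power `p^(m) = p^m A_p ∩ A` of a prime ideal `p`. -/
noncomputable def symbolicPower {A : Type*} [CommRing A] (p : Ideal A) (hp : p.IsPrime)
    (m : ℕ) : Ideal A :=
  contractedPow p p hp m

/-- A Noetherian local ring is regular if its maximal ideal can be generated by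
`dim R` elements. -/
def IsRegularLocal (R : Type*) [CommRing R] : Prop :=
  ∃ (_ : IsNoetherianRing R) (h : IsLocalRing R) (s : Finset R),
    (s.card : WithBot ℕ∞) = ringKrullDim R ∧
    Ideal.span (s : Set R) = @IsLocalRing.maximalIdeal R _ h

/-- A ring is equidimensional if `dim (A / I) = dim A` for every minimal prime `I` of `A`. -/
def RingEquidimensional (A : Type*) [CommRing A] : Prop :=
  ∀ I ∈ minimalPrimes A, ringKrullDim (A ⧸ I) = ringKrullDim A

/-- A local ring is quasi-unmixed if its completion is equidimensional. -/
def QuasiUnmixed (A : Type*) [CommRing A] [IsLocalRing A] : Prop :=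
  RingEquidimensional (AdicCompletion (maximalIdeal A) A)

/-- A ring is analytically unramified along an ideal `n` (for a local ring, its maximal
ideal) if the `n`-adic completion is reduced. -/
def AnalyticallyUnramified {A : Type*} [CommRing A] (n : Ideal A) : Prop :=
  IsReduced (AdicCompletion n A)

set_option maxHeartbeats 4000000
set_option synthInstance.maxHeartbeats 1000000

open IsLocalRing

section Helpers

variable {R : Type*} [CommRing R]

lemma mem_loc_comap (P : Ideal R) [hP : P.IsPrime] (I : Ideal R) (a : R) :
    a ∈ (Ideal.map (algebraMap R (Localization.AtPrime P)) I).comap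
        (algebraMap R (Localization.AtPrime P)) ↔ ∃ t, t ∉ P ∧ t * a ∈ I := by
  rw [Ideal.mem_comap]
  constructor
  · intro h
    rw [IsLocalization.mem_map_algebraMap_iff P.primeCompl] at h
    obtain ⟨⟨⟨i, hi⟩, ⟨t, ht⟩⟩, h⟩ := h
    simp only at h
    rw [← map_mul] at h
    obtain ⟨⟨c, hc⟩, hc2⟩ := (IsLocalization.eq_iff_exists P.primeCompl _).mp h
    simp only at hc2
    refine ⟨c * t, fun hmem => ?_, ?_⟩
    · rcases hP.mem_or_mem hmem with h' | h'
      exacts [hc h', ht h']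
    · have heq : (c * t) * a = c * i := by rw [← hc2]; ring
      rw [heq]; exact I.mul_mem_left c hi
  · rintro ⟨t, ht, hta⟩
    have h1 : algebraMap R (Localization.AtPrime P) (t * a) ∈
        Ideal.map (algebraMap R (Localization.AtPrime P)) I :=
      Ideal.mem_map_of_mem _ hta
    rw [map_mul] at h1
    exact (Ideal.unit_mul_mem_iff_mem _
      (IsLocalization.map_units (Localization.AtPrime P) (⟨t, ht⟩ : P.primeCompl))).mp h1

lemma one_not_mem_prime {Q : Ideal R} (hQ : Q.IsPrime) : (1 : R) ∉ Q :=
  (Ideal.ne_top_iff_one Q).mp hQ.ne_top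

/-- The saturation of `I` at the prime `Q`. -/
def satI (I Q : Ideal R) (hQ : Q.IsPrime) : Ideal R where
  carrier := {z | ∃ t, t ∉ Q ∧ t * z ∈ I}
  zero_mem' := ⟨1, one_not_mem_prime hQ, by simp⟩
  add_mem' := by
    rintro a b ⟨t, ht, hta⟩ ⟨u, hu, hub⟩
    refine ⟨t * u, fun h => ((hQ.mem_or_mem h).elim ht hu), ?_⟩
    have heq : t * u * (a + b) = u * (t * a) + t * (u * b) := by ring
    rw [heq]
    exact I.add_mem (I.mul_mem_left _ hta) (I.mul_mem_left _ hub)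
  smul_mem' := by
    rintro c z ⟨t, ht, htz⟩
    refine ⟨t, ht, ?_⟩
    have heq : t * (c • z) = c * (t * z) := by rw [smul_eq_mul]; ring
    rw [heq]; exact I.mul_mem_left _ htz

lemma mem_satI {I Q : Ideal R} {hQ : Q.IsPrime} {z : R} :
    z ∈ satI I Q hQ ↔ ∃ t, t ∉ Q ∧ t * z ∈ I := Iff.rfl

lemma le_satI (I Q : Ideal R) (hQ : Q.IsPrime) : I ≤ satI I Q hQ :=
  fun z hz => ⟨1, one_not_mem_prime hQ, by simpa⟩

lemma satI_mono {I I' : Ideal R} (Q : Ideal R) (hQ : Q.IsPrime) (h : I ≤ I') :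
    satI I Q hQ ≤ satI I' Q hQ := by
  rintro z ⟨t, ht, htz⟩
  exact ⟨t, ht, h htz⟩

lemma map_maxIdeal {R S : Type*} [CommRing R] [CommRing S] [IsLocalRing R] [IsLocalRing S]
    (f : R →+* S) (hf : Function.Surjective f) (hker : RingHom.ker f ≤ maximalIdeal R) :
    Ideal.map f (maximalIdeal R) = maximalIdeal S := by
  apply le_antisymm
  · apply le_maximalIdeal
    intro htop
    have h1 := Ideal.comap_map_of_surjective f hf (maximalIdeal R)
    rw [htop, Ideal.comap_top] at h1
    have h2 : (⊤ : Ideal R) ≤ maximalIdeal R := by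
      rw [h1]
      exact sup_le le_rfl hker
    exact (maximalIdeal.isMaximal R).ne_top (top_le_iff.mp h2)
  · conv_lhs => rw [← Ideal.map_comap_of_surjective f hf (maximalIdeal S)]
    apply Ideal.map_mono
    apply le_maximalIdeal
    intro h
    have h1 : (1 : R) ∈ Ideal.comap f (maximalIdeal S) := h ▸ trivial
    rw [Ideal.mem_comap, map_one] at h1
    exact (maximalIdeal.isMaximal S).ne_top ((Ideal.eq_top_iff_one _).mpr h1)

end Helpers

section Artinian

variable {A : Type*} [CommRing A]

/-- A finite module killed by a maximal ideal is Artinian. -/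
lemma isArtinian_of_killed {m : Ideal A} (hm : m.IsMaximal) (M : Type*) [AddCommGroup M]
    [Module A M] [Module.Finite A M] (h : ∀ a ∈ m, ∀ v : M, a • v = 0) :
    IsArtinian A M := by
  have htor : Module.IsTorsionBySet A M m := fun v a => h a.1 a.2 v
  letI := htor.module
  haveI : IsScalarTower A (A ⧸ m) M := htor.isScalarTower
  haveI : Module.Finite (A ⧸ m) M := Module.Finite.of_restrictScalars_finite A _ _
  haveI : IsArtinianRing (A ⧸ m) := by
    letI := Ideal.Quotient.field m
    exact DivisionRing.instIsArtinianRing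
  haveI hart : IsArtinian (A ⧸ m) M := inferInstance
  let f : Submodule A M → Submodule (A ⧸ m) M := fun N =>
    { carrier := N
      add_mem' := fun ha hb => N.add_mem ha hb
      zero_mem' := N.zero_mem
      smul_mem' := by
        intro c v hv
        obtain ⟨a, rfl⟩ := Ideal.Quotient.mk_surjective c
        rw [htor.mk_smul]
        exact N.smul_mem a hv }
  have hf : StrictMono f := by
    intro N N' hNN'
    have h1 : (N : Set M) ⊂ (N' : Set M) := SetLike.lt_iff_le_and_exists.mp hNN' |>.imp
      id (fun h => by obtain ⟨x, hx, hx'⟩ := h; exact Set.not_subset.mpr ⟨x, hx, hx'⟩) |> fun ⟨h1, h2⟩ => ⟨h1, h2⟩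
    exact SetLike.coe_ssubset_coe.mp h1
  exact hf.wellFoundedLT

/-- A finite module over a Noetherian ring killed by a power of a maximal ideal is Artinian. -/
lemma isArtinian_of_killed_pow [IsNoetherianRing A] {m : Ideal A} (hm : m.IsMaximal) :
    ∀ (k : ℕ) (M : Type u_7) [AddCommGroup M] [Module A M] [Module.Finite A M],
    (∀ a ∈ m ^ k, ∀ v : M, a • v = 0) → IsArtinian A M := by
  intro k
  induction k with
  | zero =>
    intro M _ _ _ h
    haveI : Subsingleton M := by
      constructor
      intro v w
      have h1 := h 1 (by simp) v
      have h2 := h 1 (by simp) w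
      rw [one_smul] at h1 h2
      rw [h1, h2]
    infer_instance
  | succ k ih =>
    intro M _ _ _ h
    set N : Submodule A M := (m ^ k) • ⊤ with hN
    haveI : IsNoetherian A M := inferInstance
    haveI : Module.Finite A N := Module.Finite.iff_fg.mpr (IsNoetherian.noetherian N)
    haveI hN1 : IsArtinian A N := by
      apply isArtinian_of_killed hm
      intro a ha v
      apply Subtype.ext
      rw [Submodule.coe_smul, Submodule.coe_zero]
      have hv : (v : M) ∈ (m ^ k) • (⊤ : Submodule A M) := v.2
      refine Submodule.smul_induction_on hv ?_ ?_
      · intro r hr w _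
        rw [smul_smul]
        exact h (a * r) (by rw [pow_succ']; exact Ideal.mul_mem_mul ha hr) w
      · intro u w hu hw
        rw [smul_add, hu, hw, add_zero]
    haveI hN2 : IsArtinian A (M ⧸ N) := by
      apply ih
      intro a ha v
      obtain ⟨w, rfl⟩ := Submodule.Quotient.mk_surjective N v
      rw [← Submodule.Quotient.mk_smul, Submodule.Quotient.mk_eq_zero]
      exact Submodule.smul_mem_smul ha trivial
    exact isArtinian_of_range_eq_ker N.subtype N.mkQ
      (by rw [Submodule.range_subtype, Submodule.ker_mkQ])

/-- A Noetherian ring with a nilpotent maximal ideal is Artinian. -/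
lemma isArtinianRing_of_nilpotent_max [IsNoetherianRing A] {m : Ideal A} (hm : m.IsMaximal)
    (k : ℕ) (hk : m ^ k = ⊥) : IsArtinianRing A := by
  apply isArtinian_of_killed_pow hm k A
  intro a ha v
  rw [hk] at ha
  rw [Ideal.mem_bot] at ha
  rw [ha, zero_smul]

end Artinian

section PITsec

variable {R : Type*} [CommRing R]

lemma pit_core {L : Type*} [CommRing L] [IsNoetherianRing L] [IsLocalRing L]
    (x' : L) (A' B' : Ideal L) (hA' : A'.IsPrime) (hB' : B'.IsPrime)
    (hx'max : x' ∈ maximalIdeal L) (hx'B' : x' ∉ B') (hA'B' : A' ≤ B')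
    (hk : ∃ k, maximalIdeal L ^ k ≤ A' ⊔ Ideal.span {x'})
    (hbex : ∃ b', b' ∈ B' ∧ b' ∉ A') : False := by
  obtain ⟨k, hk⟩ := hk
  set J : Ideal L := A' ⊔ Ideal.span {x'} with hJdef
  have hJC : J ≤ maximalIdeal L := by
    rw [hJdef]
    refine sup_le (le_maximalIdeal hA'.ne_top) ?_
    rw [Ideal.span_singleton_le_iff_mem]
    exact hx'max
  -- the Artinian quotient
  haveI : Nontrivial (L ⧸ J) := Ideal.Quotient.nontrivial_iff.mpr (by
    intro h
    rw [h] at hJC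
    exact (maximalIdeal.isMaximal L).ne_top (top_le_iff.mp hJC))
  haveI : IsLocalRing (L ⧸ J) := of_surjective' _ Ideal.Quotient.mk_surjective
  have hkerJ : RingHom.ker (Ideal.Quotient.mk J) ≤ maximalIdeal L := by
    rw [Ideal.mk_ker]; exact hJC
  have hmapmax : Ideal.map (Ideal.Quotient.mk J) (maximalIdeal L) = maximalIdeal (L ⧸ J) :=
    map_maxIdeal _ Ideal.Quotient.mk_surjective hkerJ
  have hnilp : (maximalIdeal (L ⧸ J)) ^ k = ⊥ := by
    rw [← hmapmax, ← Ideal.map_pow]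
    rw [← le_bot_iff, ← Ideal.map_quotient_self J]
    exact Ideal.map_mono hk
  haveI hart : IsArtinianRing (L ⧸ J) :=
    isArtinianRing_of_nilpotent_max (maximalIdeal.isMaximal _) k hnilp
  -- symbolic-type powers of B'
  set σ : ℕ → Ideal L := fun n => satI (B' ^ n ⊔ A') B' hB' with hσdef
  have hσanti : ∀ {n m : ℕ}, n ≤ m → σ m ≤ σ n := by
    intro n m h
    exact satI_mono _ _ (sup_le_sup_right (Ideal.pow_le_pow_right h) _)
  have hA'σ : ∀ n, A' ≤ σ n := fun n => le_trans le_sup_right (le_satI _ _ _)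
  have hB'σ : ∀ n, B' ^ n ≤ σ n := fun n => le_trans le_sup_left (le_satI _ _ _)
  set f : ℕ →o (Ideal (L ⧸ J))ᵒᵈ :=
    ⟨fun n => Ideal.map (Ideal.Quotient.mk J) (σ n), fun n m hnm => Ideal.map_mono (hσanti hnm)⟩
    with hfdef
  obtain ⟨N, hN⟩ := IsArtinian.monotone_stabilizes f
  have hstep : ∀ n, N ≤ n → σ n ≤ σ (n + 1) := by
    intro n hn
    have hmapeq : Ideal.map (Ideal.Quotient.mk J) (σ n)
        = Ideal.map (Ideal.Quotient.mk J) (σ (n + 1)) := by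
      have e1 := hN n hn
      have e2 := hN (n + 1) (le_trans hn (Nat.le_succ n))
      exact congrArg OrderDual.ofDual (e1.symm.trans e2)
    have hsup : σ n ⊔ J = σ (n + 1) ⊔ J := by
      have h1 := Ideal.comap_map_of_surjective (Ideal.Quotient.mk J)
        Ideal.Quotient.mk_surjective (σ n)
      have h2 := Ideal.comap_map_of_surjective (Ideal.Quotient.mk J)
        Ideal.Quotient.mk_surjective (σ (n + 1))
      rw [← RingHom.ker_eq_comap_bot, Ideal.mk_ker] at h1 h2
      rw [← h1, ← h2, hmapeq]
    have hsub : σ n ≤ σ (n + 1) ⊔ (maximalIdeal L) • (σ n) := by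
      intro z hz
      have hz2 : z ∈ σ (n + 1) ⊔ J := by rw [← hsup]; exact Ideal.mem_sup_left hz
      obtain ⟨w, hw, u, hu, hwu⟩ := Submodule.mem_sup.mp hz2
      rw [hJdef] at hu
      obtain ⟨v, hv, y, hy, hvy⟩ := Submodule.mem_sup.mp hu
      obtain ⟨c, hc⟩ := Ideal.mem_span_singleton.mp hy
      rw [hc] at hvy
      have hxc : x' * c ∈ σ n := by
        have heq : x' * c = z - w - v := by rw [← hwu, ← hvy]; ring
        rw [heq]
        exact Submodule.sub_mem _ (Submodule.sub_mem _ hz (hσanti (Nat.le_succ n) hw))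
          (hA'σ n hv)
      obtain ⟨t, ht, htc⟩ := mem_satI.mp hxc
      have hcσ : c ∈ σ n := by
        refine mem_satI.mpr ⟨t * x', fun hmem => (hB'.mem_or_mem hmem).elim ht hx'B', ?_⟩
        rw [mul_assoc]
        exact htc
      have hz3 : z = (w + v) + x' * c := by rw [← hwu, ← hvy]; ring
      rw [hz3]
      refine Submodule.add_mem _ ?_ ?_
      · exact Ideal.mem_sup_left (Submodule.add_mem _ hw (hA'σ (n + 1) hv))
      · apply Ideal.mem_sup_right
        rw [Ideal.smul_eq_mul]
        exact Ideal.mul_mem_mul hx'max hcσ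
    exact Submodule.le_of_le_smul_of_le_jacobson_bot (IsNoetherian.noetherian _)
      (by rw [IsLocalRing.jacobson_eq_maximalIdeal ⊥ bot_ne_top]) hsub
  have hconst : ∀ n, σ N ≤ σ n := by
    intro n
    rcases le_or_gt n N with h | h
    · exact hσanti h
    · induction n with
      | zero => exact absurd h (Nat.not_lt_zero N)
      | succ n ih =>
        rcases Nat.lt_or_ge N (n + 1) with h2 | h2
        · have hNn : N ≤ n := Nat.lt_succ_iff.mp h2
          refine le_trans ?_ (hstep n hNn)
          rcases Nat.eq_or_lt_of_le hNn with rfl | h3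
          · exact le_refl (σ N)
          · exact ih h3
        · exact hσanti h2
  -- localize further at B'
  haveI := hB'
  have hdisj2 : Disjoint (B'.primeCompl : Set L) (A' : Set L) := by
    rw [Set.disjoint_left]
    intro t ht ht'
    exact ht (hA'B' ht')
  haveI : IsNoetherianRing (Localization.AtPrime B') :=
    IsLocalization.isNoetherianRing B'.primeCompl _ ‹_›
  set ψ := algebraMap L (Localization.AtPrime B') with hψ
  set A'' := Ideal.map ψ A' with hA''def
  have hA'' : A''.IsPrime :=
    IsLocalization.isPrime_of_isPrime_disjoint B'.primeCompl _ A' hA' hdisj2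
  have hcomapA'' : Ideal.comap ψ A'' = A' :=
    IsLocalization.comap_map_of_isPrime_disjoint _ _ hA' hdisj2
  have hB''max : Ideal.map ψ B' = maximalIdeal (Localization.AtPrime B') :=
    Localization.AtPrime.map_eq_maximalIdeal
  haveI : Nontrivial ((Localization.AtPrime B') ⧸ A'') := Ideal.Quotient.nontrivial_iff.mpr hA''.ne_top
  haveI : IsLocalRing ((Localization.AtPrime B') ⧸ A'') :=
    of_surjective' _ Ideal.Quotient.mk_surjective
  set π := Ideal.Quotient.mk A'' with hπ
  have hmapσ : ∀ n, Ideal.map ψ (σ n) ≤ (Ideal.map ψ B') ^ n ⊔ A'' := by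
    intro n
    rw [Ideal.map_le_iff_le_comap]
    intro z hz
    obtain ⟨t, ht, htz⟩ := mem_satI.mp hz
    rw [Ideal.mem_comap]
    have h1 : ψ (t * z) ∈ Ideal.map ψ (B' ^ n ⊔ A') := Ideal.mem_map_of_mem _ htz
    rw [Ideal.map_sup, Ideal.map_pow, map_mul] at h1
    exact (Ideal.unit_mul_mem_iff_mem _
      (IsLocalization.map_units (Localization.AtPrime B') (⟨t, ht⟩ : B'.primeCompl))).mp h1
  set E := Ideal.map π (Ideal.map ψ B') with hEdef
  have hkerA'' : RingHom.ker π ≤ maximalIdeal (Localization.AtPrime B') := by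
    rw [hπ, Ideal.mk_ker]
    exact le_maximalIdeal hA''.ne_top
  have hEmax : E = maximalIdeal ((Localization.AtPrime B') ⧸ A'') := by
    rw [hEdef, hB''max]
    exact map_maxIdeal _ Ideal.Quotient.mk_surjective hkerA''
  have hEproper : E ≠ ⊤ := by
    rw [hEmax]
    exact (maximalIdeal.isMaximal _).ne_top
  have hfinal : Ideal.map π (Ideal.map ψ (σ N)) = ⊥ := by
    rw [← le_bot_iff, ← Ideal.iInf_pow_eq_bot_of_isLocalRing E hEproper]
    apply le_iInf
    intro n
    calc Ideal.map π (Ideal.map ψ (σ N)) ≤ Ideal.map π (Ideal.map ψ (σ n)) :=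
          Ideal.map_mono (Ideal.map_mono (hconst n))
      _ ≤ Ideal.map π ((Ideal.map ψ B') ^ n ⊔ A'') := Ideal.map_mono (hmapσ n)
      _ = E ^ n ⊔ Ideal.map π A'' := by rw [Ideal.map_sup, Ideal.map_pow]
      _ = E ^ n ⊔ ⊥ := by rw [hπ, Ideal.map_quotient_self]
      _ = E ^ n := by rw [sup_bot_eq]
  -- produce the contradiction
  obtain ⟨b', hbB, hbA⟩ := hbex
  have hbσ : b' ^ N ∈ σ N := hB'σ N (Ideal.pow_mem_pow hbB N)
  have h0 : π (ψ (b' ^ N)) = 0 := by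
    have hmem : π (ψ (b' ^ N)) ∈ Ideal.map π (Ideal.map ψ (σ N)) :=
      Ideal.mem_map_of_mem _ (Ideal.mem_map_of_mem _ hbσ)
    rw [hfinal] at hmem
    exact Ideal.mem_bot.mp hmem
  have h1 : ψ (b' ^ N) ∈ A'' := by
    rw [hπ] at h0
    exact Ideal.Quotient.eq_zero_iff_mem.mp h0
  rw [map_pow] at h1
  have h2 : ψ b' ∈ A'' := hA''.mem_of_pow_mem N h1
  exact hbA (by rw [← hcomapA'']; exact h2)

theorem principal_ideal_theorem [IsNoetherianRing R] (x : R) (A B C : Ideal R)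
    (hA : A.IsPrime) (hB : B.IsPrime) (hC : C.IsPrime)
    (hAB : A < B) (hBC : B < C)
    (hmin : C ∈ (A ⊔ Ideal.span {x}).minimalPrimes) : False := by
  haveI := hC
  haveI : IsNoetherianRing (Localization.AtPrime C) :=
    IsLocalization.isNoetherianRing C.primeCompl _ ‹_›
  have hdisj : ∀ P : Ideal R, P ≤ C → Disjoint (C.primeCompl : Set R) (P : Set R) := by
    intro P hP
    rw [Set.disjoint_left]
    intro t ht ht'
    exact ht (hP ht')
  have hAC : A ≤ C := le_trans hAB.le hBC.le
  have hBCle : B ≤ C := hBC.le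
  set φ := algebraMap R (Localization.AtPrime C) with hφ
  have hA' : (Ideal.map φ A).IsPrime :=
    IsLocalization.isPrime_of_isPrime_disjoint C.primeCompl _ A hA (hdisj A hAC)
  have hB' : (Ideal.map φ B).IsPrime :=
    IsLocalization.isPrime_of_isPrime_disjoint C.primeCompl _ B hB (hdisj B hBCle)
  have hcomapA : Ideal.comap φ (Ideal.map φ A) = A :=
    IsLocalization.comap_map_of_isPrime_disjoint _ _ hA (hdisj A hAC)
  have hcomapB : Ideal.comap φ (Ideal.map φ B) = B :=
    IsLocalization.comap_map_of_isPrime_disjoint _ _ hB (hdisj B hBCle)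
  have hCmax : Ideal.map φ C = maximalIdeal (Localization.AtPrime C) :=
    Localization.AtPrime.map_eq_maximalIdeal
  have hxC : x ∈ C := hmin.1.2 (Ideal.mem_sup_right (Ideal.mem_span_singleton_self x))
  have hxB : x ∉ B := by
    intro hxB
    have hle : A ⊔ Ideal.span {x} ≤ B :=
      sup_le hAB.le ((Ideal.span_singleton_le_iff_mem B).mpr hxB)
    exact hBC.not_ge (hmin.2 ⟨hB, hle⟩ hBC.le)
  have hx'B' : φ x ∉ Ideal.map φ B := fun h => hxB (by rw [← hcomapB]; exact h)
  have hx'max : φ x ∈ maximalIdeal (Localization.AtPrime C) := by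
    rw [← hCmax]; exact Ideal.mem_map_of_mem φ hxC
  -- radical of J is the maximal ideal
  have hJC : Ideal.map φ A ⊔ Ideal.span {φ x} ≤ maximalIdeal (Localization.AtPrime C) := by
    refine sup_le (le_maximalIdeal hA'.ne_top) ?_
    rw [Ideal.span_singleton_le_iff_mem]
    exact hx'max
  have hprime_unique : ∀ Q : Ideal (Localization.AtPrime C),
      Ideal.map φ A ⊔ Ideal.span {φ x} ≤ Q → Q.IsPrime →
      Q = maximalIdeal (Localization.AtPrime C) := by
    intro Q hJQ hQ
    have hq := (IsLocalization.isPrime_iff_isPrime_disjoint C.primeCompl _ Q).mp hQ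
    have hqC : Ideal.comap φ Q ≤ C := by
      intro y hy
      by_contra hyC
      exact (Set.disjoint_left.mp hq.2) hyC hy
    have hqI : A ⊔ Ideal.span {x} ≤ Ideal.comap φ Q := by
      refine sup_le ?_ ?_
      · intro a ha
        exact Ideal.mem_comap.mpr (hJQ (Ideal.mem_sup_left (Ideal.mem_map_of_mem φ ha)))
      · rw [Ideal.span_singleton_le_iff_mem, Ideal.mem_comap]
        exact hJQ (Ideal.mem_sup_right (Ideal.mem_span_singleton_self (φ x)))
    obtain ⟨p₀, hp₀, hp₀q⟩ := @Ideal.exists_minimalPrimes_le _ _ _ _ hq.1 hqI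
    have hCp₀ : C ≤ p₀ := hmin.2 hp₀.1 (le_trans hp₀q hqC)
    have hqeq : Ideal.comap φ Q = C := le_antisymm hqC (le_trans hCp₀ hp₀q)
    calc Q = Ideal.map φ (Ideal.comap φ Q) := (IsLocalization.map_comap C.primeCompl _ Q).symm
      _ = maximalIdeal (Localization.AtPrime C) := by rw [hqeq, hCmax]
  have hradJ : (Ideal.map φ A ⊔ Ideal.span {φ x}).radical
      = maximalIdeal (Localization.AtPrime C) := by
    rw [Ideal.radical_eq_sInf]
    apply le_antisymm
    · exact sInf_le ⟨hJC, (maximalIdeal.isMaximal _).isPrime⟩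
    · apply le_sInf
      rintro Q ⟨hJQ, hQ⟩
      exact le_of_eq (hprime_unique Q hJQ hQ).symm
  obtain ⟨k, hk⟩ := Ideal.exists_radical_pow_le_of_fg (Ideal.map φ A ⊔ Ideal.span {φ x})
    (IsNoetherian.noetherian _)
  rw [hradJ] at hk
  -- b ∈ B \ A
  obtain ⟨b, hbB, hbA⟩ := SetLike.exists_of_lt hAB
  exact pit_core (φ x) (Ideal.map φ A) (Ideal.map φ B) hA' hB' hx'max hx'B'
    (Ideal.map_mono hAB.le) ⟨k, hk⟩
    ⟨φ b, Ideal.mem_map_of_mem φ hbB, fun h => hbA (by rw [← hcomapA]; exact h)⟩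

end PITsec

section Slide

variable {R : Type*} [CommRing R]

lemma eraseLast_last_lt {α : Type*} [Preorder α] (c : LTSeries α) (h : 1 ≤ c.length) :
    c.eraseLast.last < c.last := by
  rw [RelSeries.last_eraseLast]
  apply c.strictMono
  simp [Fin.lt_def, Fin.last]
  omega

/-- Chain sliding: given a chain of primes of length `d ≥ 1` whose top contains `x`,
there is a chain of length `d - 1` with the same top, all of whose members contain `x`. -/
lemma slide [IsNoetherianRing R] (x : R) :
    ∀ d : ℕ, 1 ≤ d → ∀ c : LTSeries (PrimeSpectrum R), c.length = d →
      x ∈ c.last.asIdeal →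
      ∃ c' : LTSeries (PrimeSpectrum R), c'.length = d - 1 ∧ x ∈ c'.head.asIdeal ∧
        c'.last = c.last := by
  intro d
  induction d with
  | zero => intro h; exact absurd h (by norm_num)
  | succ d ih =>
    intro _ c hc hx
    by_cases hd : d = 0
    · subst hd
      refine ⟨RelSeries.singleton _ c.last, rfl, ?_, RelSeries.last_singleton _⟩
      rw [RelSeries.head_singleton]
      exact hx
    · have hd1 : 1 ≤ d := Nat.one_le_iff_ne_zero.mpr hd
      have hlen1 : 1 ≤ c.length := by omega
      have herase : c.eraseLast.length = d := by rw [RelSeries.eraseLast_length, hc]; omega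
      by_cases hxS : x ∈ c.eraseLast.last.asIdeal
      · obtain ⟨c₀, h₀len, h₀head, h₀last⟩ := ih hd1 c.eraseLast herase hxS
        refine ⟨c₀.snoc c.last (by rw [h₀last]; exact eraseLast_last_lt c hlen1), ?_, ?_, ?_⟩
        · rw [RelSeries.snoc_length, h₀len]; omega
        · rw [RelSeries.head_snoc]; exact h₀head
        · rw [RelSeries.last_snoc]
      · -- x ∉ second-to-last prime; use the principal ideal theorem
        have hlen2 : 2 ≤ c.length := by omega
        have herase2 : c.eraseLast.eraseLast.length = d - 1 := by
          rw [RelSeries.eraseLast_length, herase]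
        -- U < S < T
        set U := c.eraseLast.eraseLast.last with hU
        set S := c.eraseLast.last with hS
        set T := c.last with hT
        have hUS : U < S := eraseLast_last_lt c.eraseLast (by omega)
        have hST : S < T := eraseLast_last_lt c hlen1
        have hxU : x ∉ U.asIdeal := fun h => hxS (hUS.le h)
        -- a minimal prime of U + (x) inside T
        have hle : U.asIdeal ⊔ Ideal.span {x} ≤ T.asIdeal :=
          sup_le (le_trans hUS.le hST.le) ((Ideal.span_singleton_le_iff_mem _).mpr hx)
        haveI : T.asIdeal.IsPrime := T.isPrime
        obtain ⟨P, hPmin, hPT⟩ := Ideal.exists_minimalPrimes_le hle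
        haveI hPprime : P.IsPrime := hPmin.1.1
        have hPneT : P ≠ T.asIdeal := by
          intro h
          exact principal_ideal_theorem x U.asIdeal S.asIdeal T.asIdeal
            U.isPrime S.isPrime T.isPrime hUS hST (h ▸ hPmin)
        have hUP : U < (⟨P, hPprime⟩ : PrimeSpectrum R) := by
          have h1 : U.asIdeal ≤ P := le_trans le_sup_left hPmin.1.2
          have h2 : U.asIdeal ≠ P := by
            intro h
            apply hxU
            rw [h]
            exact hPmin.1.2 (Ideal.mem_sup_right (Ideal.mem_span_singleton_self x))
          exact lt_of_le_of_ne h1 (fun hh => h2 (congrArg PrimeSpectrum.asIdeal hh))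
        have hPltT : (⟨P, hPprime⟩ : PrimeSpectrum R) < T :=
          lt_of_le_of_ne hPT (fun hh => hPneT (congrArg PrimeSpectrum.asIdeal hh))
        set c₂ := (c.eraseLast.eraseLast).snoc ⟨P, hPprime⟩ (by rw [← hU]; exact hUP) with hc₂
        have hc₂len : c₂.length = d := by
          rw [hc₂, RelSeries.snoc_length, herase2]; omega
        have hxP : x ∈ c₂.last.asIdeal := by
          rw [hc₂, RelSeries.last_snoc]
          exact hPmin.1.2 (Ideal.mem_sup_right (Ideal.mem_span_singleton_self x))
        obtain ⟨c₀, h₀len, h₀head, h₀last⟩ := ih hd1 c₂ hc₂len hxP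
        refine ⟨c₀.snoc T (by rw [h₀last, hc₂, RelSeries.last_snoc]; exact hPltT), ?_, ?_, ?_⟩
        · rw [RelSeries.snoc_length, h₀len]; omega
        · rw [RelSeries.head_snoc]; exact h₀head
        · rw [RelSeries.last_snoc]

end Slide

section Domain

universe u

lemma isDomain_of_bot_prime {R : Type u} [CommRing R] [Nontrivial R]
    (h : (⊥ : Ideal R).IsPrime) : IsDomain R := by
  haveI : NoZeroDivisors R := by
    constructor
    intro a b hab
    have : a * b ∈ (⊥ : Ideal R) := Ideal.mem_bot.mpr hab
    rcases h.mem_or_mem this with h' | h'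
    · exact Or.inl (Ideal.mem_bot.mp h')
    · exact Or.inr (Ideal.mem_bot.mp h')
  exact NoZeroDivisors.to_isDomain R

lemma domain_of_regular_aux :
    ∀ (e : ℕ) (R : Type u) [CommRing R] [IsLocalRing R] [IsNoetherianRing R],
      ∀ s : Finset R, s.card ≤ e → Ideal.span (s : Set R) = maximalIdeal R →
      ∀ c : LTSeries (PrimeSpectrum R), c.length = e → IsDomain R := by
  intro e
  induction e with
  | zero =>
    intro R _ _ _ s hcard hspan c hc
    have hs : s = ∅ := Finset.card_eq_zero.mp (Nat.le_zero.mp hcard)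
    rw [hs, Finset.coe_empty, Ideal.span_empty] at hspan
    -- maximal ideal is ⊥, so R is a field, hence a domain
    haveI : NoZeroDivisors R := by
      constructor
      intro a b hab
      by_contra hcon
      push_neg at hcon
      have ha : IsUnit a := by
        by_contra hu
        have hmem : a ∈ maximalIdeal R := hu
        rw [← hspan] at hmem
        exact hcon.1 (Ideal.mem_bot.mp hmem)
      obtain ⟨u, rfl⟩ := ha
      exact hcon.2 (u.mul_right_eq_zero.mp hab)
    exact NoZeroDivisors.to_isDomain R
  | succ e ih =>
    intro R _ _ _ s hcard hspan c hc
    classical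
    have hlen1 : 1 ≤ c.length := by omega
    -- two primes in the chain
    have hPP : c.eraseLast.last < c.last := eraseLast_last_lt c hlen1
    haveI hlastprime : c.last.asIdeal.IsPrime := c.last.isPrime
    have hlastle : c.last.asIdeal ≤ maximalIdeal R := le_maximalIdeal hlastprime.ne_top
    have helastle : c.eraseLast.last.asIdeal ≤ maximalIdeal R :=
      le_maximalIdeal c.eraseLast.last.isPrime.ne_top
    -- prime avoidance setup
    have hMPfin := minimalPrimes.finite_of_isNoetherianRing R
    set MP : Finset (Ideal R) := hMPfin.toFinset with hMPdef
    have havoid : ¬ (((maximalIdeal R) : Set R) ⊆ ⋃ i ∈ insert ((maximalIdeal R) * (maximalIdeal R)) MP, (i : Set R)) := by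
      intro hsubset
      have hiff := Ideal.subset_union_prime (s := insert ((maximalIdeal R) * (maximalIdeal R)) MP) (f := fun i => i)
        ((maximalIdeal R) * (maximalIdeal R)) ((maximalIdeal R) * (maximalIdeal R)) (I := (maximalIdeal R)) ?hp
      case hp =>
        intro i hi h1 _
        rcases Finset.mem_insert.mp hi with h | h
        · exact absurd h h1
        · exact ((hMPfin.mem_toFinset.mp h).1.1 : i.IsPrime)
      obtain ⟨i, hi, hmi⟩ := hiff.mp hsubset
      rcases Finset.mem_insert.mp hi with rfl | hiMP
      · -- (maximalIdeal R) ≤ (maximalIdeal R) * (maximalIdeal R) : Nakayama gives (maximalIdeal R) = ⊥, contradicting the chain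
        have hbot : (maximalIdeal R) = ⊥ := by
          refine Submodule.eq_bot_of_le_smul_of_le_jacobson_bot (maximalIdeal R) (maximalIdeal R)
            (IsNoetherian.noetherian _) ?_ ?_
          · rw [Ideal.smul_eq_mul]; exact hmi
          · rw [IsLocalRing.jacobson_eq_maximalIdeal ⊥ bot_ne_top]
        have h1 : c.eraseLast.last.asIdeal = ⊥ := le_bot_iff.mp (hbot ▸ helastle)
        have h2 : c.last.asIdeal = ⊥ := le_bot_iff.mp (hbot ▸ hlastle)
        have : c.eraseLast.last.asIdeal < c.last.asIdeal := hPP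
        rw [h1, h2] at this
        exact lt_irrefl _ this
      · -- (maximalIdeal R) ≤ a minimal prime: all primes equal (maximalIdeal R), contradicting the chain
        have hiQ := hMPfin.mem_toFinset.mp hiMP
        have hQle : i ≤ c.eraseLast.last.asIdeal :=
          hiQ.2 ⟨c.eraseLast.last.isPrime, bot_le⟩ (le_trans helastle hmi)
        have : c.last.asIdeal ≤ c.eraseLast.last.asIdeal :=
          le_trans hlastle (le_trans hmi hQle)
        exact absurd this (not_le_of_gt hPP)
    obtain ⟨x', hx'm, hx'notU⟩ := Set.not_subset.mp havoid
    have hx'mm : x' ∉ (maximalIdeal R) * (maximalIdeal R) := fun h =>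
      hx'notU (Set.mem_biUnion (Finset.mem_insert_self _ _) h)
    have hx'min : ∀ Q ∈ minimalPrimes R, x' ∉ Q := fun Q hQ h =>
      hx'notU (Set.mem_biUnion (Finset.mem_insert_of_mem (hMPfin.mem_toFinset.mpr hQ)) h)
    -- the quotient ring
    have hspanx'le : Ideal.span {x'} ≤ (maximalIdeal R) := (Ideal.span_singleton_le_iff_mem (maximalIdeal R)).mpr hx'm
    have hspanx'ne : Ideal.span {x'} ≠ ⊤ := fun h =>
      (maximalIdeal.isMaximal R).ne_top (top_le_iff.mp (h ▸ hspanx'le))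
    haveI : Nontrivial (R ⧸ Ideal.span {x'}) := Ideal.Quotient.nontrivial_iff.mpr hspanx'ne
    haveI : IsLocalRing (R ⧸ Ideal.span {x'}) := of_surjective' _ Ideal.Quotient.mk_surjective
    have hq : Ideal.map (Ideal.Quotient.mk (Ideal.span {x'})) (maximalIdeal R)
        = maximalIdeal (R ⧸ Ideal.span {x'}) :=
      map_maxIdeal _ Ideal.Quotient.mk_surjective (by rw [Ideal.mk_ker]; exact hspanx'le)
    -- a smaller generating set
    have hx'span : x' ∈ Submodule.span R (s : Set R) := by
      show x' ∈ Ideal.span (s : Set R)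
      rw [hspan]; exact hx'm
    obtain ⟨f, -, hf⟩ := Submodule.mem_span_finset.mp hx'span
    simp only [smul_eq_mul] at hf
    have hex : ∃ i₀ ∈ s, f i₀ ∉ (maximalIdeal R) := by
      by_contra hcon
      push_neg at hcon
      apply hx'mm
      rw [← hf]
      apply Ideal.sum_mem
      intro i hi
      exact Ideal.mul_mem_mul (hcon i hi) (by rw [← hspan]; exact Ideal.subset_span hi)
    obtain ⟨i₀, hi₀s, hi₀⟩ := hex
    have hunit : IsUnit (f i₀) := by
      by_contra hu
      exact hi₀ hu
    have hspan2 : Ideal.span (insert x' ((s.erase i₀ : Finset R) : Set R)) = (maximalIdeal R) := by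
      apply le_antisymm
      · rw [Ideal.span_le]
        rintro y (rfl | hy)
        · exact hx'm
        · rw [← hspan]
          exact Ideal.subset_span (Finset.mem_coe.mpr (Finset.mem_of_mem_erase
            (Finset.mem_coe.mp hy)))
      · rw [← hspan, Ideal.span_le]
        intro i hi
        have his : i ∈ s := Finset.mem_coe.mp hi
        by_cases hii : i = i₀
        · subst hii
          have hsum := Finset.sum_erase_add s (fun j => f j * j) hi₀s
          have hmem : f i * i ∈ Ideal.span (insert x' ((s.erase i : Finset R) : Set R)) := by
            have heq : f i * i = x' - ∑ j ∈ s.erase i, f j * j := by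
              rw [← hf, ← hsum]; ring
            rw [heq]
            refine Submodule.sub_mem _ (Ideal.subset_span (Set.mem_insert _ _)) ?_
            apply Ideal.sum_mem
            intro j hj
            exact Ideal.mul_mem_left _ _ (Ideal.subset_span
              (Set.mem_insert_of_mem _ (Finset.mem_coe.mpr hj)))
          exact (Ideal.unit_mul_mem_iff_mem _ hunit).mp hmem
        · exact Ideal.subset_span (Set.mem_insert_of_mem _
            (Finset.mem_coe.mpr (Finset.mem_erase.mpr ⟨hii, his⟩)))
    set t : Finset (R ⧸ Ideal.span {x'}) := (s.erase i₀).image (Ideal.Quotient.mk _) with ht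
    have htcard : t.card ≤ e := by
      have h1 : t.card ≤ (s.erase i₀).card := Finset.card_image_le
      have h2 : (s.erase i₀).card = s.card - 1 := Finset.card_erase_of_mem hi₀s
      have h3 : 1 ≤ s.card := Finset.card_pos.mpr ⟨i₀, hi₀s⟩
      omega
    have htspan : Ideal.span (t : Set (R ⧸ Ideal.span {x'}))
        = maximalIdeal (R ⧸ Ideal.span {x'}) := by
      rw [← hq, ← hspan2, Ideal.map_span, Set.image_insert_eq]
      rw [Ideal.Quotient.eq_zero_iff_mem.mpr (Ideal.mem_span_singleton_self x')]
      rw [ht, Finset.coe_image]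
      exact (Submodule.span_insert_zero).symm
    -- the chain in the quotient
    have hcm : ∃ c₁ : LTSeries (PrimeSpectrum R), c₁.length = e + 1 ∧ x' ∈ c₁.last.asIdeal := by
      by_cases hcl : x' ∈ c.last.asIdeal
      · exact ⟨c, hc, hcl⟩
      · refine ⟨c.eraseLast.snoc ⟨(maximalIdeal R), (maximalIdeal.isMaximal R).isPrime⟩
          (lt_of_lt_of_le hPP hlastle), ?_, ?_⟩
        · rw [RelSeries.snoc_length, RelSeries.eraseLast_length, hc]; omega
        · rw [RelSeries.last_snoc]; exact hx'm
    obtain ⟨c₁, hc₁len, hc₁x⟩ := hcm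
    obtain ⟨c₀, h₀len, h₀head, _⟩ := slide x' (e + 1) (by omega) c₁ hc₁len hc₁x
    have hall : ∀ i, x' ∈ (c₀.toFun i).asIdeal := by
      intro i
      have hmono : c₀.toFun 0 ≤ c₀.toFun i := c₀.strictMono.monotone (Fin.zero_le i)
      exact hmono h₀head
    have hkerle : ∀ i, RingHom.ker (Ideal.Quotient.mk (Ideal.span {x'}))
        ≤ (c₀.toFun i).asIdeal := by
      intro i
      rw [Ideal.mk_ker]
      exact (Ideal.span_singleton_le_iff_mem _).mpr (hall i)
    have hcomap : ∀ j, Ideal.comap (Ideal.Quotient.mk (Ideal.span {x'}))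
        (Ideal.map (Ideal.Quotient.mk (Ideal.span {x'})) (c₀.toFun j).asIdeal)
        = (c₀.toFun j).asIdeal := by
      intro j
      rw [Ideal.comap_map_of_surjective _ Ideal.Quotient.mk_surjective,
        ← RingHom.ker_eq_comap_bot]
      exact sup_eq_left.mpr (hkerle j)
    set c' : LTSeries (PrimeSpectrum (R ⧸ Ideal.span {x'})) :=
      { length := e
        toFun := fun i => ⟨Ideal.map (Ideal.Quotient.mk (Ideal.span {x'}))
            (c₀.toFun (Fin.cast (by omega) i)).asIdeal,
          Ideal.map_isPrime_of_surjective Ideal.Quotient.mk_surjective (hkerle _)⟩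
        step := by
          intro i
          have h1 : (c₀.toFun (Fin.cast (by omega) i.castSucc)).asIdeal
              < (c₀.toFun (Fin.cast (by omega) i.succ)).asIdeal := by
            apply c₀.strictMono
            simp [Fin.lt_def]
          have hne : Ideal.map (Ideal.Quotient.mk (Ideal.span {x'}))
                (c₀.toFun (Fin.cast (by omega) i.castSucc)).asIdeal
              ≠ Ideal.map (Ideal.Quotient.mk (Ideal.span {x'}))
                (c₀.toFun (Fin.cast (by omega) i.succ)).asIdeal := by
            intro heq
            have h2 := congrArg (Ideal.comap (Ideal.Quotient.mk (Ideal.span {x'}))) heq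
            rw [hcomap, hcomap] at h2
            exact h1.ne h2
          exact lt_of_le_of_ne (Ideal.map_mono h1.le)
            (fun hh => hne hh) } with hc'
    haveI hdom : IsDomain (R ⧸ Ideal.span {x'}) := ih _ t htcard htspan c' rfl
    -- span {x'} is prime; finish by Nakayama on a minimal prime inside it
    have hxprime : (Ideal.span {x'}).IsPrime := (Ideal.Quotient.isDomain_iff_prime _).mp hdom
    obtain ⟨p₀, hp₀, hp₀le⟩ := @Ideal.exists_minimalPrimes_le R _ ⊥ (Ideal.span {x'})
      hxprime bot_le
    have hx'p₀ : x' ∉ p₀ := hx'min p₀ hp₀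
    have hsub : p₀ ≤ (Ideal.span {x'}) • p₀ := by
      intro y hy
      obtain ⟨z, hz⟩ := Ideal.mem_span_singleton.mp (hp₀le hy)
      have hzp : z ∈ p₀ := by
        rcases hp₀.1.1.mem_or_mem (hz ▸ hy) with h | h
        · exact absurd h hx'p₀
        · exact h
      rw [hz, Ideal.smul_eq_mul]
      exact Ideal.mul_mem_mul (Ideal.mem_span_singleton_self x') hzp
    have hbot : p₀ = ⊥ := Submodule.eq_bot_of_le_smul_of_le_jacobson_bot (Ideal.span {x'}) p₀
      (IsNoetherian.noetherian _) hsub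
      (by rw [IsLocalRing.jacobson_eq_maximalIdeal ⊥ bot_ne_top]; exact hspanx'le)
    exact isDomain_of_bot_prime (hbot ▸ hp₀.1.1)

end Domain

section MainProof

variable {R : Type*} [CommRing R]

lemma mem_symbolicPower (q : Ideal R) (hq : q.IsPrime) (n : ℕ) (a : R) :
    a ∈ symbolicPower q hq n ↔ ∃ t, t ∉ q ∧ t * a ∈ q ^ n := by
  letI := hq
  show a ∈ (Ideal.map (algebraMap R (Localization.AtPrime q)) q ^ n).comap
      (algebraMap R (Localization.AtPrime q)) ↔ _
  rw [← Ideal.map_pow]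
  exact mem_loc_comap q (q ^ n) a

lemma symbolicPower_eq_pow_of_principal [IsDomain R] (x : R) (p : Ideal R)
    (hpdef : p = Ideal.span {x}) (hp : p.IsPrime) (m : ℕ) (hm : 0 < m) :
    symbolicPower p hp m = p ^ m := by
  apply le_antisymm
  · intro a ha
    obtain ⟨t, htp, hta⟩ := (mem_symbolicPower p hp m a).mp ha
    by_cases hx0 : x = 0
    · subst hx0
      have hpbot : p = ⊥ := by rw [hpdef]; exact Ideal.span_singleton_eq_bot.mpr rfl
      rw [hpbot] at htp hta ⊢
      have h0 : t * a = 0 := Ideal.mem_bot.mp (Ideal.pow_le_self hm.ne' hta)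
      rcases mul_eq_zero.mp h0 with h | h
      · exact absurd (Ideal.mem_bot.mpr h) htp
      · rw [h]; exact Submodule.zero_mem _
    · have hxprime : Prime x := (Ideal.span_singleton_prime hx0).mp (hpdef ▸ hp)
      have hdvd : x ^ m ∣ t * a := by
        rw [hpdef, Ideal.span_singleton_pow, Ideal.mem_span_singleton] at hta
        exact hta
      have hnd : ¬ x ∣ t := fun h => htp (by rw [hpdef]; exact Ideal.mem_span_singleton.mpr h)
      have hdvda : x ^ m ∣ a := hxprime.pow_dvd_of_dvd_mul_left m hnd hdvd
      rw [hpdef, Ideal.span_singleton_pow, Ideal.mem_span_singleton]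
      exact hdvda
  · intro a ha
    exact (mem_symbolicPower p hp m a).mpr ⟨1, one_not_mem_prime hp, by rwa [one_mul]⟩

lemma exists_chain_of_krullDim {R : Type*} [CommRing R] [IsLocalRing R] (d : ℕ)
    (hdim : (d : WithBot ℕ∞) = ringKrullDim R) :
    ∃ c : LTSeries (PrimeSpectrum R), c.length = d := by
  haveI : Nonempty (PrimeSpectrum R) :=
    ⟨⟨maximalIdeal R, (maximalIdeal.isMaximal R).isPrime⟩⟩
  rw [ringKrullDim, Order.krullDim_eq_iSup_length] at hdim
  have hd : (⨆ p : LTSeries (PrimeSpectrum R), (p.length : ℕ∞)) = (d : ℕ∞) := by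
    exact_mod_cast hdim.symm
  by_contra hno
  push_neg at hno
  have hle : ∀ p : LTSeries (PrimeSpectrum R), p.length ≤ d := by
    intro p
    have h1 := le_iSup (fun p : LTSeries (PrimeSpectrum R) => (p.length : ℕ∞)) p
    rw [hd] at h1
    exact_mod_cast h1
  rcases Nat.eq_zero_or_pos d with rfl | hdpos
  · exact hno (RelSeries.singleton _ ⟨maximalIdeal R, (maximalIdeal.isMaximal R).isPrime⟩) rfl
  · have hlt : ∀ p : LTSeries (PrimeSpectrum R), (p.length : ℕ∞) ≤ ((d - 1 : ℕ) : ℕ∞) := by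
      intro p
      have h1 := hle p
      have h2 := hno p
      exact_mod_cast Nat.le_sub_one_of_lt (lt_of_le_of_ne h1 h2)
    have h3 := iSup_le hlt
    rw [hd] at h3
    have h4 : d ≤ d - 1 := by exact_mod_cast h3
    omega

end MainProof

/-- Let `(R, 𝔪)` be a regular local ring, `p = xR` a principal prime
ideal, and `q` a prime with `x ∉ q`.  Then for all positive integers `m`, `n`,
`p^(m) ∩ q^(n) = p^m · q^(n)`; in particular `p^(m) ∩ q^(n) ⊆ 𝔪^(m+n)` whenever
`q^(n) ⊆ 𝔪^n`. -/
theorem statement12 (R : Type*) [CommRing R] [IsLocalRing R] [IsNoetherianRing R]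
    (hreg : ∃ s : Finset R, (s.card : WithBot ℕ∞) = ringKrullDim R ∧
      Ideal.span (s : Set R) = IsLocalRing.maximalIdeal R)
    (x : R) (p q : Ideal R) (hpdef : p = Ideal.span {x})
    (hp : p.IsPrime) (hq : q.IsPrime) (hx : x ∉ q)
    (m n : ℕ) (hm : 0 < m) (hn : 0 < n) :
    symbolicPower p hp m ⊓ symbolicPower q hq n = p ^ m * symbolicPower q hq n ∧
    (symbolicPower q hq n ≤ IsLocalRing.maximalIdeal R ^ n →
      symbolicPower p hp m ⊓ symbolicPower q hq n ≤
        IsLocalRing.maximalIdeal R ^ (m + n)) := by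
  obtain ⟨s, hscard, hsspan⟩ := hreg
  obtain ⟨c, hclen⟩ := exists_chain_of_krullDim s.card hscard
  haveI : IsDomain R := domain_of_regular_aux s.card R s le_rfl hsspan c hclen
  have hsymb : symbolicPower p hp m = p ^ m :=
    symbolicPower_eq_pow_of_principal x p hpdef hp m hm
  have hmain : symbolicPower p hp m ⊓ symbolicPower q hq n = p ^ m * symbolicPower q hq n := by
    apply le_antisymm
    · intro a ha
      obtain ⟨ha1, ha2⟩ := Submodule.mem_inf.mp ha
      rw [hsymb, hpdef, Ideal.span_singleton_pow, Ideal.mem_span_singleton] at ha1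
      obtain ⟨b, rfl⟩ := ha1
      obtain ⟨t, htq, htb⟩ := (mem_symbolicPower q hq n _).mp ha2
      have htx : t * x ^ m ∉ q := by
        intro hmem
        rcases hq.mem_or_mem hmem with h | h
        · exact htq h
        · exact hx (hq.mem_of_pow_mem m h)
      have hb : b ∈ symbolicPower q hq n :=
        (mem_symbolicPower q hq n b).mpr ⟨t * x ^ m, htx, by
          have heq : t * x ^ m * b = t * (x ^ m * b) := by ring
          rw [heq]; exact htb⟩
      have hxm : x ^ m ∈ p ^ m := by
        rw [hpdef, Ideal.span_singleton_pow]
        exact Ideal.mem_span_singleton_self _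
      exact Ideal.mul_mem_mul hxm hb
    · apply le_inf
      · rw [hsymb]; exact Ideal.mul_le_left
      · exact Ideal.mul_le_right
  refine ⟨hmain, ?_⟩
  intro hqn
  rw [hmain]
  have hple : p ≤ maximalIdeal R := le_maximalIdeal hp.ne_top
  calc p ^ m * symbolicPower q hq n ≤ maximalIdeal R ^ m * maximalIdeal R ^ n :=
        Ideal.mul_mono (Ideal.pow_right_mono hple m) hqn
    _ = maximalIdeal R ^ (m + n) := (pow_add _ m n).symm
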